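/- If the Graham conjecture holds for s = 2 (every B \subset \mathbb{N} \times \mathbb{N} with \sum_{(x,y) \in B} 1/(x^2+y^2) = \infty contains an axes-parallel square), then the Erd\H{o}s-Tur\'an conjecture holds for k = 3 (every A \subset \mathbb{N} with \sum_{a \in A} 1/a = \infty contains a 3-term arithmetic progression). -/

import Mathlib

open scoped ENNReal

theorem stmt5
    (graham2 : ∀ B : Set (ℕ × ℕ), (∀ p ∈ B, 0 < p.1 ∧ 0 < p.2) →
      (∑' p : B, (1 / ((p.1.1 : ℝ≥0∞) ^ 2 + (p.1.2 : ℝ≥0∞) ^ 2)) = ⊤) →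
      ∃ x y l : ℕ, 0 < l ∧ (x, y) ∈ B ∧ (x + l, y) ∈ B ∧ (x, y + l) ∈ B ∧
        (x + l, y + l) ∈ B) :
    ∀ A : Set ℕ, (∀ a ∈ A, 0 < a) → (∑' a : A, (1 / (a : ℝ≥0∞)) = ⊤) →
      ∃ a d : ℕ, 0 < d ∧ a ∈ A ∧ a + d ∈ A ∧ a + 2 * d ∈ A := by
  intro A hpos hsum
  classical
  set f : ℕ → ℝ≥0∞ := fun n => 1 / (n : ℝ≥0∞) with hf
  set g : ℕ × ℕ → ℝ≥0∞ := fun p => 1 / ((p.1 : ℝ≥0∞) ^ 2 + (p.2 : ℝ≥0∞) ^ 2) with hg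
  set A' : Set ℕ := {a ∈ A | 3 ≤ a} with hA'
  set B : Set (ℕ × ℕ) := {p | 0 < p.1 ∧ 0 < p.2 ∧ p.1 + 2 * p.2 ∈ A} with hB
  -- Step 1: the sum over A' is still ⊤
  have hA'sum : ∑' a : A', f a = ⊤ := by
    by_contra hne
    have hind : ∀ b ∉ ({1, 2} : Finset ℕ), (({1, 2} : Set ℕ).indicator f) b = 0 := by
      intro b hb
      simp only [Finset.mem_insert, Finset.mem_singleton] at hb
      push_neg at hb
      apply Set.indicator_of_notMem
      simp only [Set.mem_insert_iff, Set.mem_singleton_iff]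
      omega
    have hsmall : ∑' n : ℕ, (({1, 2} : Set ℕ).indicator f) n ≠ ⊤ := by
      rw [tsum_eq_sum hind]
      refine (ENNReal.sum_lt_top.2 ?_).ne
      intro i hi
      fin_cases hi <;> simp [Set.indicator_apply, hf]
    have hpt : ∀ n : ℕ, A.indicator f n ≤ A'.indicator f n + ({1, 2} : Set ℕ).indicator f n := by
      intro n
      by_cases hn : n ∈ A
      · by_cases h3 : 3 ≤ n
        · have hn' : n ∈ A' := ⟨hn, h3⟩
          rw [Set.indicator_of_mem hn, Set.indicator_of_mem hn']
          exact le_self_add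
        · have hn0 := hpos n hn
          have hn' : n ∈ ({1, 2} : Set ℕ) := by
            simp only [Set.mem_insert_iff, Set.mem_singleton_iff]; omega
          rw [Set.indicator_of_mem hn, Set.indicator_of_mem hn']
          exact le_add_self
      · simp [Set.indicator_of_notMem hn]
    have hle : ∑' a : A, f a ≤ (∑' a : A', f a) + ∑' n : ℕ, (({1, 2} : Set ℕ).indicator f) n := by
      rw [tsum_subtype A f, tsum_subtype A' f, ← ENNReal.tsum_add]
      exact ENNReal.tsum_le_tsum hpt
    rw [hsum] at hle
    exact (ENNReal.add_ne_top.2 ⟨hne, hsmall⟩) (top_le_iff.1 hle)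
  -- Step 2: the sum over B is ⊤
  have hBsum : ∑' p : B, g p = ⊤ := by
    -- index type: a ∈ A' together with y in [1, (a-1)/2]
    have hmem : ∀ t : (Σ a : A', {y // y ∈ Finset.Icc 1 (((a : ℕ) - 1) / 2)}), ((t.1 : ℕ) - 2 * (t.2 : ℕ), (t.2 : ℕ)) ∈ B := by
      rintro ⟨⟨a, ha, ha3⟩, y, hy⟩
      simp only [Finset.mem_Icc] at hy
      refine ⟨by simp; omega, by simp; omega, ?_⟩
      simp only
      have : a - 2 * y + 2 * y = a := by omega
      rw [this]; exact ha
    set i : (Σ a : A', {y // y ∈ Finset.Icc 1 (((a : ℕ) - 1) / 2)}) → B := fun t => ⟨((t.1 : ℕ) - 2 * (t.2 : ℕ), (t.2 : ℕ)), hmem t⟩ with hi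
    have hinj : Function.Injective i := by
      rintro ⟨⟨a, ha⟩, y, hy⟩ ⟨⟨a', ha'⟩, y', hy'⟩ h
      simp only [hi, Subtype.mk.injEq, Prod.mk.injEq] at h
      simp only [Finset.mem_Icc] at hy hy'
      have h1 : a = a' := by
        have h3 : 3 ≤ a := ha.2
        have h3' : 3 ≤ a' := ha'.2
        omega
      subst h1
      have h2 : y = y' := h.2
      subst h2
      rfl
    have key : ∑' t : (Σ a : A', {y // y ∈ Finset.Icc 1 (((a : ℕ) - 1) / 2)}), g (i t) ≤ ∑' p : B, g p :=
      ENNReal.tsum_comp_le_tsum_of_injective hinj _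
    -- lower bound each term by 1 / a^2
    have hterm : ∀ t : (Σ a : A', {y // y ∈ Finset.Icc 1 (((a : ℕ) - 1) / 2)}), 1 / ((t.1 : ℕ) : ℝ≥0∞) ^ 2 ≤ g (i t) := by
      rintro ⟨⟨a, ha, ha3⟩, y, hy⟩
      simp only [Finset.mem_Icc] at hy
      simp only [hi, hg]
      refine ENNReal.div_le_div_left ?_ 1
      have hx : a - 2 * y + y ≤ a := by omega
      calc ((a - 2 * y : ℕ) : ℝ≥0∞) ^ 2 + (y : ℝ≥0∞) ^ 2
          ≤ ((a - 2 * y : ℕ) : ℝ≥0∞) ^ 2 + (2 * ((a - 2*y : ℕ) : ℝ≥0∞) * (y : ℝ≥0∞) + (y : ℝ≥0∞) ^ 2) :=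
            add_le_add_right le_add_self _
        _ = ((a - 2 * y : ℕ) : ℝ≥0∞) ^ 2 + 2 * ((a - 2*y : ℕ) : ℝ≥0∞) * (y : ℝ≥0∞) + (y : ℝ≥0∞) ^ 2 := by
            ring
        _ = (((a - 2 * y : ℕ) : ℝ≥0∞) + (y : ℝ≥0∞)) ^ 2 := by ring
        _ ≤ ((a : ℕ) : ℝ≥0∞) ^ 2 := by
            gcongr
            rw [← Nat.cast_add]
            exact_mod_cast hx
    -- sum over T of 1/a^2 is at least (1/4) * sum over A' of 1/a
    have hTsum : ∑' a : A', f a ≤ 4 * ∑' t : (Σ a : A', {y // y ∈ Finset.Icc 1 (((a : ℕ) - 1) / 2)}), 1 / ((t.1 : ℕ) : ℝ≥0∞) ^ 2 := by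
      have hsig : ∑' t : (Σ a : A', {y // y ∈ Finset.Icc 1 (((a : ℕ) - 1) / 2)}),
          1 / ((t.1 : ℕ) : ℝ≥0∞) ^ 2
          = ∑' (a : A') (_ : {y // y ∈ Finset.Icc 1 (((a : ℕ) - 1) / 2)}),
            1 / ((a : ℕ) : ℝ≥0∞) ^ 2 :=
        ENNReal.tsum_sigma (fun (a : A') (_ : {y // y ∈ Finset.Icc 1 (((a : ℕ) - 1) / 2)}) =>
          1 / ((a : ℕ) : ℝ≥0∞) ^ 2)
      rw [hsig, ← ENNReal.tsum_mul_left]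
      refine ENNReal.tsum_le_tsum (fun a => ?_)
      rw [Finset.tsum_subtype (Finset.Icc 1 (((a : ℕ) - 1) / 2)) (fun _ => 1 / ((a : ℕ) : ℝ≥0∞) ^ 2),
        Finset.sum_const, Nat.card_Icc]
      obtain ⟨a, ha, ha3⟩ := a
      simp only [hf]
      set k := (a - 1) / 2 with hk
      have hka : a ≤ 4 * (k + 1 - 1) := by omega
      have ha0 : (a : ℝ≥0∞) ≠ 0 := by exact_mod_cast (by omega : a ≠ 0)
      have haT : (a : ℝ≥0∞) ≠ ⊤ := ENNReal.natCast_ne_top a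
      calc 1 / (a : ℝ≥0∞) = (a : ℝ≥0∞) * (1 / (a : ℝ≥0∞) ^ 2) := by
            rw [one_div, one_div, sq, ENNReal.mul_inv (Or.inl ha0) (Or.inl haT), ← mul_assoc,
              ENNReal.mul_inv_cancel ha0 haT, one_mul]
        _ ≤ ((4 * (k + 1 - 1) : ℕ) : ℝ≥0∞) * (1 / (a : ℝ≥0∞) ^ 2) := by
            exact mul_le_mul_left (by exact_mod_cast hka) _
        _ = 4 * ((k + 1 - 1) • (1 / (a : ℝ≥0∞) ^ 2)) := by
            rw [nsmul_eq_mul]; push_cast; ring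
    have : (⊤ : ℝ≥0∞) ≤ 4 * ∑' p : B, g p := by
      calc (⊤ : ℝ≥0∞) = ∑' a : A', f a := hA'sum.symm
        _ ≤ 4 * ∑' t : (Σ a : A', {y // y ∈ Finset.Icc 1 (((a : ℕ) - 1) / 2)}), 1 / ((t.1 : ℕ) : ℝ≥0∞) ^ 2 := hTsum
        _ ≤ 4 * ∑' t : (Σ a : A', {y // y ∈ Finset.Icc 1 (((a : ℕ) - 1) / 2)}), g (i t) := mul_le_mul_right (ENNReal.tsum_le_tsum hterm) 4
        _ ≤ 4 * ∑' p : B, g p := mul_le_mul_right key 4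
    have h4 : (4 : ℝ≥0∞) ≠ ⊤ := by simp
    rcases eq_top_iff.2 (le_trans this (le_refl _)) with h
    by_contra hne
    exact absurd h (by
      rw [ENNReal.mul_eq_top]
      push_neg
      constructor
      · intro _; exact hne
      · intro h'; exact absurd h' h4)
  have hBpos : ∀ p ∈ B, 0 < p.1 ∧ 0 < p.2 := fun p hp => ⟨hp.1, hp.2.1⟩
  obtain ⟨x, y, l, hl, h1, h2, h3, _⟩ := graham2 B hBpos hBsum
  refine ⟨x + 2 * y, l, hl, h1.2.2, ?_, ?_⟩
  · have := h2.2.2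
    simpa [add_comm, add_left_comm, add_assoc] using this
  · have := h3.2.2
    have heq : x + 2 * (y + l) = x + 2 * y + 2 * l := by ring
    rwa [heq] at this
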